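/- Weighted test sets (Theorem 3.1): for any vector r ∈ ℝⁿ with r_j > 0 for all j, the weighted minimax value satisfies: min over g ∈ [−1,1]ⁿ of sup over z ∈ Z of (1/n)·Σ_{j=1}^n r_j·ℓ(z_j, g_j) = (1/2)·inf over σ ∈ ℝᵖ with σ ≥ 0 of [−bᵀσ + (1/n)·Σ_{j=1}^n r_j·Ψ(x_jᵀσ / r_j)]. -/

import Mathlib

open scoped BigOperators

open scoped InnerProductSpace

noncomputable def Psi (lp lm Γinv : ℝ → ℝ) (m : ℝ) : ℝ :=
  if m ≤ lm (-1) - lp (-1) then -m + 2 * lm (-1)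
  else if m < lm 1 - lp 1 then lp (Γinv m) + lm (Γinv m)
  else m + 2 * lp 1

def ZSet (p n : ℕ) (F : Fin p → Fin n → ℝ) (b : Fin p → ℝ) : Set (Fin n → ℝ) :=
  {z | (∀ j, z j ∈ Set.Icc (-1:ℝ) 1) ∧ ∀ i, b i ≤ (1 / (n : ℝ)) * ∑ j, F i j * z j}



lemma cone_carath {E : Type*} [AddCommGroup E] [Module ℝ E] {ι : Type*} [Fintype ι]
    [DecidableEq ι] (v : ι → E) :
    ∀ (t : Finset ι) (σ : ι → ℝ), (∀ i, 0 ≤ σ i) → (∀ i ∉ t, σ i = 0) →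
    ∃ (t' : Finset ι) (σ' : ι → ℝ), LinearIndependent ℝ (fun i : t' => v i) ∧
      (∀ i, 0 ≤ σ' i) ∧ (∀ i ∉ t', σ' i = 0) ∧ ∑ i, σ' i • v i = ∑ i, σ i • v i := by
  intro t
  induction t using Finset.strongInduction with
  | _ t ih =>
    intro σ hσ hsupp
    by_cases hLI : LinearIndependent ℝ (fun i : t => v i)
    · exact ⟨t, σ, hLI, hσ, hsupp, rfl⟩
    · obtain ⟨g, hg0, i₀, hi₀⟩ := Fintype.not_linearIndependent_iff.mp hLI
      have key : ∀ c : ι → ℝ, (∑ i, c i • v i = 0) → (∀ i ∉ t, c i = 0) →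
          (∃ i, 0 < c i) →
          ∃ (t' : Finset ι) (σ' : ι → ℝ), LinearIndependent ℝ (fun i : t' => v i) ∧
            (∀ i, 0 ≤ σ' i) ∧ (∀ i ∉ t', σ' i = 0) ∧ ∑ i, σ' i • v i = ∑ i, σ i • v i := by
        rintro c hcsum hcsupp ⟨iw, hiw⟩
        have hiwt : iw ∈ t := by
          by_contra h; rw [hcsupp iw h] at hiw; exact lt_irrefl 0 hiw
        set T : Finset ι := t.filter (fun i => 0 < c i) with hT
        have hTne : T.Nonempty := ⟨iw, by simp [hT, hiwt, hiw]⟩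
        obtain ⟨i₁, hi₁T, hi₁min⟩ := T.exists_min_image (fun i => σ i / c i) hTne
        have hi₁t : i₁ ∈ t := (Finset.mem_filter.mp hi₁T).1
        have hci₁ : 0 < c i₁ := (Finset.mem_filter.mp hi₁T).2
        set τ : ℝ := σ i₁ / c i₁ with hτ
        have hτ0 : 0 ≤ τ := div_nonneg (hσ i₁) hci₁.le
        set σ' : ι → ℝ := fun i => σ i - τ * c i with hσ'
        have hσ'0 : ∀ i, 0 ≤ σ' i := by
          intro i
          by_cases hcpos : 0 < c i
          · have hit : i ∈ t := by
              by_contra h; rw [hcsupp i h] at hcpos; exact lt_irrefl 0 hcpos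
            have h1 : τ ≤ σ i / c i := hi₁min i (Finset.mem_filter.mpr ⟨hit, hcpos⟩)
            have h2 : τ * c i ≤ σ i := (le_div_iff₀ hcpos).mp h1
            simp only [hσ']; linarith
          · push_neg at hcpos
            have : τ * c i ≤ 0 := mul_nonpos_of_nonneg_of_nonpos hτ0 hcpos
            simp only [hσ']; nlinarith [hσ i]
        have hσ'i₁ : σ' i₁ = 0 := by
          simp only [hσ', hτ]; field_simp; ring
        have hσ'supp : ∀ i ∉ t.erase i₁, σ' i = 0 := by
          intro i hi
          rcases Finset.mem_erase.not.mp hi with h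
          push_neg at h
          by_cases hii : i = i₁
          · rw [hii]; exact hσ'i₁
          · have hit : i ∉ t := h hii
            simp only [hσ', hsupp i hit, hcsupp i hit]; ring
        have hsum' : ∑ i, σ' i • v i = ∑ i, σ i • v i := by
          simp only [hσ', sub_smul, Finset.sum_sub_distrib, mul_smul]
          rw [← Finset.smul_sum, hcsum, smul_zero, sub_zero]
        obtain ⟨t'', σ'', h1, h2, h3, h4⟩ :=
          ih (t.erase i₁) (Finset.erase_ssubset hi₁t) σ' hσ'0 hσ'supp
        exact ⟨t'', σ'', h1, h2, h3, h4.trans hsum'⟩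
      set c : ι → ℝ := fun i => if h : i ∈ t then g ⟨i, h⟩ else 0 with hc
      have hcsum : ∑ i, c i • v i = 0 := by
        rw [← Finset.sum_subset (Finset.subset_univ t)]
        · rw [← hg0, ← Finset.sum_attach t (fun i => c i • v i)]
          apply Finset.sum_congr rfl
          intro i _
          simp [hc, i.2]
        · intro i _ hit; simp [hc, hit]
      have hcsupp : ∀ i ∉ t, c i = 0 := fun i hit => by simp [hc, hit]
      have hcne : c i₀.1 ≠ 0 := by simpa [hc, i₀.2] using hi₀
      rcases lt_or_gt_of_ne hcne with hneg | hpos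
      · refine key (fun i => -c i) ?_ (fun i hi => by simp [hcsupp i hi]) ⟨i₀.1, by simpa using neg_pos.mpr hneg⟩
        simp only [neg_smul, Finset.sum_neg_distrib, hcsum, neg_zero]
      · exact key c hcsum hcsupp ⟨i₀.1, hpos⟩


lemma cone_isClosed {m : Type} [Fintype m] {ι : Type*} [Fintype ι] (v : ι → EuclideanSpace ℝ m) :
    IsClosed {x : EuclideanSpace ℝ m | ∃ σ : ι → ℝ, (∀ i, 0 ≤ σ i) ∧ x = ∑ i, σ i • v i} := by
  classical
  have carath : ∀ (σ : ι → ℝ), (∀ i, 0 ≤ σ i) →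
      ∃ (t' : Finset ι) (σ' : ι → ℝ), LinearIndependent ℝ (fun i : t' => v i) ∧
        (∀ i, 0 ≤ σ' i) ∧ (∀ i ∉ t', σ' i = 0) ∧ ∑ i, σ' i • v i = ∑ i, σ i • v i :=
    fun σ hσ => cone_carath v Finset.univ σ hσ (fun i hi => absurd (Finset.mem_univ i) hi)
  have hrep : {x : EuclideanSpace ℝ m | ∃ σ : ι → ℝ, (∀ i, 0 ≤ σ i) ∧ x = ∑ i, σ i • v i} =
      ⋃ (t : Finset ι) (_ : LinearIndependent ℝ fun i : t => v i),
        (fun τ : t → ℝ => ∑ i, τ i • v (i : ι)) '' {τ | ∀ i, 0 ≤ τ i} := by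
    ext x
    simp only [Set.mem_setOf_eq, Set.mem_iUnion, Set.mem_image]
    constructor
    · rintro ⟨σ, hσ, rfl⟩
      obtain ⟨t', σ', hLI, h0, hsup, hsum⟩ := carath σ hσ
      refine ⟨t', hLI, fun i => σ' i, fun i => h0 i, ?_⟩
      show ∑ i : t', σ' (i : ι) • v (i : ι) = ∑ i, σ i • v i
      rw [Finset.sum_coe_sort t' (fun i => σ' i • v i),
        Finset.sum_subset (Finset.subset_univ t')
          (fun i _ hi => by rw [hsup i hi, zero_smul])]
      exact hsum
    · rintro ⟨t, hLI, τ, hτ, rfl⟩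
      refine ⟨fun i => if h : i ∈ t then τ ⟨i, h⟩ else 0, fun i => ?_, ?_⟩
      · by_cases h : i ∈ t
        · simpa [h] using hτ ⟨i, h⟩
        · simp [h]
      · show ∑ i : t, τ i • v (i : ι) =
          ∑ i : ι, (if h : i ∈ t then τ ⟨i, h⟩ else 0) • v i
        rw [eq_comm, ← Finset.sum_subset (Finset.subset_univ t)
            (fun i _ hi => by simp [hi]),
          ← Finset.sum_coe_sort t (fun i => (if h : i ∈ t then τ ⟨i, h⟩ else 0) • v i)]
        apply Finset.sum_congr rfl
        intro i _
        simp [i.2]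
  rw [hrep]
  apply isClosed_iUnion_of_finite
  intro t
  apply isClosed_iUnion_of_finite
  intro hLI
  set L : (t → ℝ) →ₗ[ℝ] EuclideanSpace ℝ m :=
    { toFun := fun τ => ∑ i, τ i • v (i : ι),
      map_add' := by intro a b; simp [add_smul, Finset.sum_add_distrib],
      map_smul' := by intro c a; simp [mul_smul, Finset.smul_sum] } with hL
  have hinj : LinearMap.ker L = ⊥ :=
    LinearMap.ker_eq_bot'.mpr fun τ hτ =>
      funext fun i => Fintype.linearIndependent_iff.mp hLI τ hτ i
  have horth : IsClosed {τ : t → ℝ | ∀ i, 0 ≤ τ i} := by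
    have : {τ : t → ℝ | ∀ i, 0 ≤ τ i} = ⋂ i, {τ : t → ℝ | 0 ≤ τ i} := by
      ext; simp [Set.mem_iInter]
    rw [this]
    exact isClosed_iInter fun i => isClosed_le continuous_const (continuous_apply i)
  exact (L.isClosedEmbedding_of_injective hinj).isClosedMap _ horth


set_option maxHeartbeats 1000000 in
lemma farkas {ρ : Type} [Fintype ρ] [DecidableEq ρ] {κ : Type} [Fintype κ] [DecidableEq κ]
    (M : ρ → κ → ℝ) (d : ρ → ℝ)
    (h : ¬ ∃ z : κ → ℝ, ∀ i, d i ≤ ∑ j, M i j * z j) :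
    ∃ lam : ρ → ℝ, (∀ i, 0 ≤ lam i) ∧ (∀ j, ∑ i, lam i * M i j = 0) ∧
      0 < ∑ i, lam i * d i := by
  classical
  -- generator family
  let E := EuclideanSpace ℝ ρ
  let ι := (κ ⊕ κ) ⊕ ρ
  let v : ι → E := fun k => WithLp.toLp 2
    (Sum.elim (Sum.elim (fun j => (fun i => M i j : ρ → ℝ))
      (fun j => (fun i => -(M i j) : ρ → ℝ)))
      (fun i0 => (fun i => if i = i0 then (-1:ℝ) else 0 : ρ → ℝ)) k)
  have coord : ∀ (σ : ι → ℝ) (i : ρ),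
      (∑ k, σ k • v k) i = ∑ j, σ (.inl (.inl j)) * M i j
        + ∑ j, σ (.inl (.inr j)) * (-(M i j)) + (- σ (.inr i)) := by
    intro σ i
    have : (∑ k, σ k • v k) i = ∑ k, σ k * v k i := by
      rw [WithLp.ofLp_sum, Finset.sum_apply]
      apply Finset.sum_congr rfl
      intro k _
      rfl
    rw [this, Fintype.sum_sum_type, Fintype.sum_sum_type]
    congr 1
    simp [v, mul_ite]
  set C : Set E := {x | ∃ σ : ι → ℝ, (∀ i, 0 ≤ σ i) ∧ x = ∑ i, σ i • v i} with hC
  -- C is a convex cone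
  let K : ConvexCone ℝ E :=
    { carrier := C
      smul_mem' := by
        rintro c hc x ⟨σ, hσ, rfl⟩
        exact ⟨fun k => c * σ k, fun k => mul_nonneg hc.le (hσ k), by
          rw [Finset.smul_sum]; apply Finset.sum_congr rfl; intro k _;
          rw [smul_smul]⟩
      add_mem' := by
        rintro x ⟨σ, hσ, rfl⟩ y ⟨σ', hσ', rfl⟩
        exact ⟨fun k => σ k + σ' k, fun k => add_nonneg (hσ k) (hσ' k), by
          rw [← Finset.sum_add_distrib]; apply Finset.sum_congr rfl; intro k _;
          rw [add_smul]⟩ }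
  have hKne : (K : Set E).Nonempty := ⟨0, ⟨fun _ => 0, fun _ => le_refl 0, by simp⟩⟩
  have hKcl : IsClosed (K : Set E) := by
    exact cone_isClosed v
  have hdC : (WithLp.toLp 2 d : E) ∉ K := by
    rintro ⟨σ, hσ, hd⟩
    apply h
    refine ⟨fun j => σ (.inl (.inl j)) - σ (.inl (.inr j)), fun i => ?_⟩
    have := coord σ i
    rw [← hd, WithLp.ofLp_toLp] at this
    have hσi : 0 ≤ σ (.inr i) := hσ _
    have expand : ∑ j, M i j * (σ (.inl (.inl j)) - σ (.inl (.inr j)))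
        = ∑ j, σ (.inl (.inl j)) * M i j + ∑ j, σ (.inl (.inr j)) * (-(M i j)) := by
      rw [← Finset.sum_add_distrib]; apply Finset.sum_congr rfl; intro j _; ring
    rw [expand]
    linarith [this]
  obtain ⟨y, hy, hyd⟩ :=
    ProperCone.hyperplane_separation' ({ toSubmodule := (K.toPointedCone
      (show (0:E) ∈ K from ⟨fun _ => 0, fun _ => le_refl 0, by simp⟩)), isClosed' := hKcl } :
      ProperCone ℝ E) hdC
  have hinner : ∀ x : E, ⟪x, y⟫_ℝ = ∑ i, x i * y i := fun x => by
    simp [E, PiLp.inner_apply, RCLike.inner_apply, mul_comm]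
  -- single generators are in K
  have hgen : ∀ k : ι, v k ∈ K := by
    intro k
    refine ⟨fun k' => if k' = k then 1 else 0, fun k' => by positivity, ?_⟩
    have e : ∀ k' : ι, (if k' = k then (1:ℝ) else 0) • v k' = if k' = k then v k' else 0 := by
      intro k'; split <;> simp
    rw [Finset.sum_congr rfl (fun k' _ => e k')]
    rw [Finset.sum_ite_eq', if_pos (Finset.mem_univ k)]
  refine ⟨fun i => -(y i), fun i => ?_, fun j => ?_, ?_⟩
  · have := hy _ (hgen (.inr i))
    rw [hinner] at this
    simp only [v, Sum.elim_inr] at this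
    simpa [ite_mul] using this
  · have h1 := hy _ (hgen (.inl (.inl j)))
    have h2 := hy _ (hgen (.inl (.inr j)))
    rw [hinner] at h1 h2
    simp only [v, Sum.elim_inl, Sum.elim_inr, neg_mul] at h1 h2
    have h2' : ∑ i, -(M i j * y i) = -∑ i, M i j * y i := by
      rw [Finset.sum_neg_distrib]
    rw [h2'] at h2
    have : ∑ i, M i j * y i = 0 := le_antisymm (by linarith) h1
    calc ∑ i, -(y i) * M i j = -∑ i, M i j * y i := by
          rw [← Finset.sum_neg_distrib]; apply Finset.sum_congr rfl; intro i _; ring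
    _ = 0 := by rw [this, neg_zero]
  · rw [hinner] at hyd
    have e : ∑ i, -(y i) * d i = -∑ i, (WithLp.toLp 2 d : E) i * y i := by
      rw [← Finset.sum_neg_distrib]; apply Finset.sum_congr rfl; intro i _
      show -(y i) * d i = -((WithLp.toLp 2 d : E) i * y i); ring
    rw [e]
    linarith


set_option maxHeartbeats 1000000 in
lemma lp_dual {p n : ℕ}
    (A : Fin p → Fin n → ℝ) (c : Fin p → ℝ) (a : Fin n → ℝ)
    (z0 : Fin n → ℝ) (hz0box : ∀ j, z0 j ∈ Set.Icc (-1:ℝ) 1)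
    (hz0c : ∀ i, c i ≤ ∑ j, A i j * z0 j)
    (S : ℝ) (hS : ∀ z : Fin n → ℝ, (∀ j, z j ∈ Set.Icc (-1:ℝ) 1) →
      (∀ i, c i ≤ ∑ j, A i j * z j) → ∑ j, a j * z j ≤ S)
    (ε : ℝ) (hε : 0 < ε) :
    ∃ σ : Fin p → ℝ, (∀ i, 0 ≤ σ i) ∧
      -(∑ i, σ i * c i) + ∑ j, |a j + ∑ i, σ i * A i j| ≤ S + ε := by
  classical
  let ρ := Fin p ⊕ (Fin n ⊕ (Fin n ⊕ Unit))
  let M : ρ → Fin n → ℝ := fun k => Sum.elim A (Sum.elim (fun j j' => if j' = j then 1 else 0)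
      (Sum.elim (fun j j' => if j' = j then (-1:ℝ) else 0) (fun _ => a))) k
  let d : ρ → ℝ := fun k =>
    Sum.elim c (Sum.elim (fun _ => -1) (Sum.elim (fun _ => -1) (fun _ => S + ε))) k
  have hinf : ¬ ∃ z : Fin n → ℝ, ∀ i, d i ≤ ∑ j, M i j * z j := by
    rintro ⟨z, hz⟩
    have hbox : ∀ j, z j ∈ Set.Icc (-1:ℝ) 1 := by
      intro j
      have h1 := hz (.inr (.inl j))
      have h2 := hz (.inr (.inr (.inl j)))
      simp only [M, d, Sum.elim_inr, Sum.elim_inl, ite_mul, one_mul, zero_mul, neg_one_mul] at h1 h2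
      rw [Finset.sum_ite_eq' Finset.univ j z] at h1
      rw [Finset.sum_ite_eq' Finset.univ j (fun j' => -(z j'))] at h2
      simp at h1 h2
      constructor <;> linarith
    have hcon : ∀ i, c i ≤ ∑ j, A i j * z j := fun i => hz (.inl i)
    have hlast := hz (.inr (.inr (.inr ())))
    simp only [M, d, Sum.elim_inr] at hlast
    have := hS z hbox hcon
    linarith
  obtain ⟨lam, hlam0, hlamM, hlamd⟩ := farkas M d hinf
  set σ : Fin p → ℝ := fun i => lam (.inl i) with hσdef
  set u : Fin n → ℝ := fun j => lam (.inr (.inl j)) with hudef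
  set w : Fin n → ℝ := fun j => lam (.inr (.inr (.inl j))) with hwdef
  set t : ℝ := lam (.inr (.inr (.inr default))) with htdef
  have hσ0 : ∀ i, 0 ≤ σ i := fun i => hlam0 _
  have hu0 : ∀ j, 0 ≤ u j := fun j => hlam0 _
  have hw0 : ∀ j, 0 ≤ w j := fun j => hlam0 _
  have ht0 : 0 ≤ t := hlam0 _
  have hrow : ∀ j, (∑ i, σ i * A i j) + u j - w j + t * a j = 0 := by
    intro j
    have h := hlamM j
    rw [Fintype.sum_sum_type, Fintype.sum_sum_type, Fintype.sum_sum_type] at h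
    simp only [M, Sum.elim_inl, Sum.elim_inr, mul_ite, mul_one, mul_zero,
      Finset.univ_unique, Finset.sum_singleton] at h
    simp only [Finset.sum_ite_eq, Finset.sum_ite_eq', Finset.mem_univ, if_true] at h
    simp only [σ, u, w, t]
    linarith [h]
  have hpos : (∑ i, σ i * c i) - (∑ j, u j) - (∑ j, w j) + t * (S + ε) > 0 := by
    have h := hlamd
    rw [Fintype.sum_sum_type, Fintype.sum_sum_type, Fintype.sum_sum_type] at h
    simp only [M, d, Sum.elim_inl, Sum.elim_inr, mul_neg_one,
      Finset.univ_unique, Finset.sum_singleton, Finset.sum_neg_distrib] at h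
    simp only [σ, u, w, t]
    linarith [h]
  rcases eq_or_lt_of_le ht0 with ht | ht
  · -- t = 0 : contradiction with z0
    exfalso
    have hrow0 : ∀ j, (∑ i, σ i * A i j) = w j - u j := by
      intro j; have := hrow j; rw [← ht] at this; linarith
    have step1 : ∑ i, σ i * c i ≤ ∑ i, σ i * (∑ j, A i j * z0 j) :=
      Finset.sum_le_sum fun i _ => mul_le_mul_of_nonneg_left (hz0c i) (hσ0 i)
    have step2 : ∑ i, σ i * (∑ j, A i j * z0 j) = ∑ j, (∑ i, σ i * A i j) * z0 j := by
      simp_rw [Finset.mul_sum, Finset.sum_mul]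
      rw [Finset.sum_comm]
      apply Finset.sum_congr rfl; intro j _; apply Finset.sum_congr rfl; intro i _; ring
    have step3 : ∑ j, (∑ i, σ i * A i j) * z0 j ≤ ∑ j, (u j + w j) := by
      apply Finset.sum_le_sum
      intro j _
      rw [hrow0 j]
      obtain ⟨hz1, hz2⟩ := hz0box j
      nlinarith [hu0 j, hw0 j]
    have : t * (S + ε) = 0 := by rw [← ht]; ring
    rw [Finset.sum_add_distrib] at step3
    linarith
  · -- t > 0
    refine ⟨fun i => σ i / t, fun i => div_nonneg (hσ0 i) ht0, ?_⟩
    have habs : ∀ j, |a j + ∑ i, σ i / t * A i j| ≤ (u j + w j) / t := by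
      intro j
      have hdiv : ∑ i, σ i / t * A i j = (∑ i, σ i * A i j) / t := by
        rw [Finset.sum_div]; apply Finset.sum_congr rfl; intro i _; ring
      have he : a j + ∑ i, σ i / t * A i j = (w j - u j) / t := by
        rw [hdiv]
        field_simp
        linarith [hrow j]
      rw [he, abs_div, abs_of_pos ht]
      have habs2 : |w j - u j| ≤ u j + w j :=
        abs_le.mpr ⟨by linarith [hu0 j, hw0 j], by linarith [hu0 j, hw0 j]⟩
      gcongr
    have hsc : ∑ i, σ i / t * c i = (∑ i, σ i * c i) / t := by
      rw [Finset.sum_div]; apply Finset.sum_congr rfl; intro i _; ring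
    have hsum : ∑ j, |a j + ∑ i, σ i / t * A i j| ≤ (∑ j, (u j + w j)) / t := by
      rw [Finset.sum_div]
      exact Finset.sum_le_sum fun j _ => habs j
    rw [hsc]
    rw [Finset.sum_add_distrib] at hsum
    have key : (-(∑ i, σ i * c i) + ((∑ j, u j) + (∑ j, w j))) / t < S + ε := by
      rw [div_lt_iff₀ ht]
      nlinarith [hpos]
    have e2 : -((∑ i, σ i * c i) / t) + ((∑ j, u j) + (∑ j, w j)) / t
        = (-(∑ i, σ i * c i) + ((∑ j, u j) + (∑ j, w j))) / t := by ring
    linarith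



section PsiLemmas
variable {lp lm Γinv : ℝ → ℝ}
variable (hlpm : AntitoneOn lp (Set.Icc (-1) 1))
variable (hlmm : MonotoneOn lm (Set.Icc (-1) 1))
variable (hGinvMem : ∀ m ∈ Set.Icc (lm (-1) - lp (-1)) (lm 1 - lp 1), Γinv m ∈ Set.Icc (-1:ℝ) 1)
variable (hGinvRight : ∀ m ∈ Set.Icc (lm (-1) - lp (-1)) (lm 1 - lp 1),
  lm (Γinv m) - lp (Γinv m) = m)

lemma neg_one_mem : (-1:ℝ) ∈ Set.Icc (-1:ℝ) 1 := by norm_num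
lemma one_mem : (1:ℝ) ∈ Set.Icc (-1:ℝ) 1 := by norm_num

include hlpm hlmm hGinvMem hGinvRight in
lemma Psi_le (m : ℝ) (g : ℝ) (hg : g ∈ Set.Icc (-1:ℝ) 1) :
    Psi lp lm Γinv m ≤ lp g + lm g + |m - (lm g - lp g)| := by
  have h1 := le_abs_self (m - (lm g - lp g))
  have h2 := neg_abs_le (m - (lm g - lp g))
  unfold Psi
  split_ifs with hc1 hc2
  · -- m ≤ Γ(-1)
    have hlm : lm (-1) ≤ lm g := hlmm neg_one_mem hg hg.1
    have hlp : lp g ≤ lp (-1) := hlpm neg_one_mem hg hg.1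
    linarith
  · -- middle
    have hm : m ∈ Set.Icc (lm (-1) - lp (-1)) (lm 1 - lp 1) := ⟨(not_le.mp hc1).le, hc2.le⟩
    have hmem := hGinvMem m hm
    have heq := hGinvRight m hm
    rcases le_total g (Γinv m) with hgh | hgh
    · have := hlpm hg hmem hgh
      linarith
    · have := hlmm hmem hg hgh
      linarith
  · -- m ≥ Γ(1)
    have hlp : lp 1 ≤ lp g := hlpm hg one_mem hg.2
    have hlm : lm g ≤ lm 1 := hlmm hg one_mem hg.2
    linarith

/-- the optimal prediction for slope `m` -/
noncomputable def gO (lp lm Γinv : ℝ → ℝ) (m : ℝ) : ℝ :=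
  if m ≤ lm (-1) - lp (-1) then -1
  else if m < lm 1 - lp 1 then Γinv m
  else 1

include hGinvMem in
lemma gO_mem (m : ℝ) : gO lp lm Γinv m ∈ Set.Icc (-1:ℝ) 1 := by
  unfold gO
  split_ifs with hc1 hc2
  · exact neg_one_mem
  · exact hGinvMem m ⟨(not_le.mp hc1).le, hc2.le⟩
  · exact one_mem

include hGinvRight in
lemma gO_opt (m : ℝ) (z : ℝ) (hz : z ∈ Set.Icc (-1:ℝ) 1) :
    lp (gO lp lm Γinv m) + lm (gO lp lm Γinv m)
      - z * (lm (gO lp lm Γinv m) - lp (gO lp lm Γinv m)) ≤ Psi lp lm Γinv m - z * m := by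
  obtain ⟨hz1, hz2⟩ := hz
  unfold gO Psi
  split_ifs with hc1 hc2
  · nlinarith [hc1]
  · have hm : m ∈ Set.Icc (lm (-1) - lp (-1)) (lm 1 - lp 1) := ⟨(not_le.mp hc1).le, hc2.le⟩
    rw [hGinvRight m hm]
  · have hge : lm 1 - lp 1 ≤ m := not_lt.mp hc2
    nlinarith [hge]

include hlpm hlmm hGinvMem hGinvRight in
lemma Psi_lb (m : ℝ) (z : ℝ) (hz : z ∈ Set.Icc (-1:ℝ) 1) :
    z * m + (1 + z) * lp 1 + (1 - z) * lm (-1) ≤ Psi lp lm Γinv m := by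
  have h := gO_opt hGinvRight m z hz
  set g := gO lp lm Γinv m with hgdef
  have hgmem : g ∈ Set.Icc (-1:ℝ) 1 := gO_mem hGinvMem m
  have hlp : lp 1 ≤ lp g := hlpm hgmem one_mem hgmem.2
  have hlm : lm (-1) ≤ lm g := hlmm neg_one_mem hgmem hgmem.1
  obtain ⟨hz1, hz2⟩ := hz
  nlinarith [hlp, hlm]
end PsiLemmas


set_option maxHeartbeats 2000000

theorem stmt_11 (p n : ℕ) (hp : 0 < p) (hn : 0 < n)
    (F : Fin p → Fin n → ℝ) (hF : ∀ i j, F i j ∈ Set.Icc (-1:ℝ) 1) (b : Fin p → ℝ)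
    (lp lm lp' lm' lp'' lm'' Γinv : ℝ → ℝ)
    (hlpc : ContinuousOn lp (Set.Icc (-1) 1))
    (hlmc : ContinuousOn lm (Set.Icc (-1) 1))
    (hlpd : ∀ x ∈ Set.Ioo (-1:ℝ) 1, HasDerivAt lp (lp' x) x)
    (hlmd : ∀ x ∈ Set.Ioo (-1:ℝ) 1, HasDerivAt lm (lm' x) x)
    (hlpd2 : ∀ x ∈ Set.Ioo (-1:ℝ) 1, HasDerivAt lp' (lp'' x) x)
    (hlmd2 : ∀ x ∈ Set.Ioo (-1:ℝ) 1, HasDerivAt lm' (lm'' x) x)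
    (hlpm : AntitoneOn lp (Set.Icc (-1) 1))
    (hlmm : MonotoneOn lm (Set.Icc (-1) 1))
    (hslope : ∀ x ∈ Set.Ioo (-1:ℝ) 1, 0 < lm' x - lp' x)
    (hGinvMem : ∀ m ∈ Set.Icc (lm (-1) - lp (-1)) (lm 1 - lp 1), Γinv m ∈ Set.Icc (-1:ℝ) 1)
    (hGinvRight : ∀ m ∈ Set.Icc (lm (-1) - lp (-1)) (lm 1 - lp 1), lm (Γinv m) - lp (Γinv m) = m)
    (hGinvLeft : ∀ g ∈ Set.Icc (-1:ℝ) 1, Γinv (lm g - lp g) = g)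
    (hZ : (ZSet p n F b).Nonempty)
    (r : Fin n → ℝ) (hr : ∀ j, 0 < r j) :
    sInf {v : ℝ | ∃ g : Fin n → ℝ, (∀ j, g j ∈ Set.Icc (-1:ℝ) 1) ∧
        v = sSup {w : ℝ | ∃ z ∈ ZSet p n F b,
          w = (1 / (n : ℝ)) * ∑ j, r j * ((1 + z j) / 2 * lp (g j) + (1 - z j) / 2 * lm (g j))}} =
      (1 / 2) * sInf {v : ℝ | ∃ σ : Fin p → ℝ, (∀ i, 0 ≤ σ i) ∧
        v = -(∑ i, b i * σ i) +
          (1 / (n : ℝ)) * ∑ j, r j * Psi lp lm Γinv ((∑ i, σ i * F i j) / r j)} := by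
  classical
  have hn' : (0:ℝ) < n := Nat.cast_pos.mpr hn
  obtain ⟨z0, hz0box, hz0con⟩ := hZ
  obtain ⟨Cp, hCp⟩ := (isCompact_Icc : IsCompact (Set.Icc (-1:ℝ) 1)).exists_bound_of_continuousOn hlpc
  obtain ⟨Cm, hCm⟩ := (isCompact_Icc : IsCompact (Set.Icc (-1:ℝ) 1)).exists_bound_of_continuousOn hlmc
  simp only [Real.norm_eq_abs] at hCp hCm
  -- abbreviations
  set Loss : (Fin n → ℝ) → (Fin n → ℝ) → ℝ := fun g z =>
    (1 / (n : ℝ)) * ∑ j, r j * ((1 + z j) / 2 * lp (g j) + (1 - z j) / 2 * lm (g j)) with hLoss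
  set W : (Fin n → ℝ) → Set ℝ := fun g => {w | ∃ z ∈ ZSet p n F b, w = Loss g z} with hW
  set SetA : Set ℝ :=
    {v | ∃ g : Fin n → ℝ, (∀ j, g j ∈ Set.Icc (-1:ℝ) 1) ∧ v = sSup (W g)} with hSetA
  set D : (Fin p → ℝ) → ℝ := fun σ => -(∑ i, b i * σ i) +
    (1 / (n : ℝ)) * ∑ j, r j * Psi lp lm Γinv ((∑ i, σ i * F i j) / r j) with hD
  set SetB : Set ℝ := {v | ∃ σ : Fin p → ℝ, (∀ i, 0 ≤ σ i) ∧ v = D σ} with hSetB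
  show sInf SetA = (1/2) * sInf SetB
  -- basic facts
  have hz0Z : z0 ∈ ZSet p n F b := ⟨hz0box, hz0con⟩
  have hswap : ∀ (σ : Fin p → ℝ) (z : Fin n → ℝ),
      ∑ j, (∑ i, σ i * F i j) * z j = ∑ i, σ i * (∑ j, F i j * z j) := by
    intro σ z
    simp_rw [Finset.sum_mul, Finset.mul_sum]
    rw [Finset.sum_comm]
    exact Finset.sum_congr rfl fun j _ => Finset.sum_congr rfl fun i _ => by ring
  have hLossBd : ∀ g z, (∀ j, g j ∈ Set.Icc (-1:ℝ) 1) → (∀ j, z j ∈ Set.Icc (-1:ℝ) 1) →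
      |Loss g z| ≤ (1 / (n:ℝ)) * ∑ j, r j * (Cp + Cm) := by
    intro g z hg hz
    rw [hLoss]
    rw [abs_mul, abs_of_nonneg (by positivity : (0:ℝ) ≤ 1 / (n:ℝ))]
    apply mul_le_mul_of_nonneg_left ?_ (by positivity : (0:ℝ) ≤ 1 / (n:ℝ))
    calc |∑ j, r j * ((1 + z j) / 2 * lp (g j) + (1 - z j) / 2 * lm (g j))|
        ≤ ∑ j, |r j * ((1 + z j) / 2 * lp (g j) + (1 - z j) / 2 * lm (g j))| :=
          Finset.abs_sum_le_sum_abs _ _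
      _ ≤ ∑ j, r j * (Cp + Cm) := by
          apply Finset.sum_le_sum
          intro j _
          rw [abs_mul, abs_of_pos (hr j)]
          apply mul_le_mul_of_nonneg_left ?_ (hr j).le
          obtain ⟨hz1, hz2⟩ := hz j
          have hbp := abs_le.mp (hCp (g j) (hg j))
          have hbm := abs_le.mp (hCm (g j) (hg j))
          rw [abs_le]
          constructor <;> nlinarith [hbp.1, hbp.2, hbm.1, hbm.2]
  have hWne : ∀ g, (W g).Nonempty := fun g => ⟨Loss g z0, z0, hz0Z, rfl⟩
  have hWbdd : ∀ g, (∀ j, g j ∈ Set.Icc (-1:ℝ) 1) → BddAbove (W g) := by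
    intro g hg
    refine ⟨(1 / (n:ℝ)) * ∑ j, r j * (Cp + Cm), ?_⟩
    rintro w ⟨z, hzZ, rfl⟩
    exact (abs_le.mp (hLossBd g z hg hzZ.1)).2
  have hAne : SetA.Nonempty := ⟨sSup (W (fun _ => 0)), fun _ => 0, fun _ => by norm_num, rfl⟩
  have hAbdd : BddBelow SetA := by
    refine ⟨-((1 / (n:ℝ)) * ∑ j, r j * (Cp + Cm)), ?_⟩
    rintro v ⟨g, hg, rfl⟩
    calc -((1 / (n:ℝ)) * ∑ j, r j * (Cp + Cm)) ≤ Loss g z0 :=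
          (abs_le.mp (hLossBd g z0 hg hz0box)).1
      _ ≤ sSup (W g) := le_csSup (hWbdd g hg) ⟨z0, hz0Z, rfl⟩
  have ecomm : ∀ σ : Fin p → ℝ, ∑ i, b i * σ i = ∑ i, σ i * b i :=
    fun σ => Finset.sum_congr rfl fun i _ => mul_comm _ _
  have hrm : ∀ (σ : Fin p → ℝ) j, r j * ((∑ i, σ i * F i j) / r j) = ∑ i, σ i * F i j :=
    fun σ j => by have := (hr j).ne'; field_simp
  -- B bounded below
  have hBne : SetB.Nonempty := ⟨D 0, 0, fun _ => le_refl 0, rfl⟩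
  have hBbdd : BddBelow SetB := by
    refine ⟨(1 / (n:ℝ)) * ∑ j, r j * ((1 + z0 j) * lp 1 + (1 - z0 j) * lm (-1)), ?_⟩
    rintro v ⟨σ, hσ0, rfl⟩
    have hpt : ∀ j, (∑ i, σ i * F i j) * z0 j + r j * ((1 + z0 j) * lp 1 + (1 - z0 j) * lm (-1))
        ≤ r j * Psi lp lm Γinv ((∑ i, σ i * F i j) / r j) := by
      intro j
      have h := Psi_lb hlpm hlmm hGinvMem hGinvRight ((∑ i, σ i * F i j) / r j) (z0 j) (hz0box j)
      have h2 := mul_le_mul_of_nonneg_left h (hr j).le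
      have e' : z0 j * (r j * ((∑ i, σ i * F i j) / r j)) = z0 j * (∑ i, σ i * F i j) := by
        rw [hrm σ j]
      nlinarith [h2, e']
    have hsum := Finset.sum_le_sum fun j (_ : j ∈ Finset.univ) => hpt j
    rw [Finset.sum_add_distrib] at hsum
    have hsum2 := mul_le_mul_of_nonneg_left hsum (by positivity : (0:ℝ) ≤ 1 / (n:ℝ))
    rw [mul_add] at hsum2
    have hlin : ∑ i, σ i * b i ≤ (1 / (n:ℝ)) * ∑ j, (∑ i, σ i * F i j) * z0 j := by
      rw [hswap σ z0, Finset.mul_sum]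
      apply Finset.sum_le_sum
      intro i _
      calc σ i * b i ≤ σ i * ((1 / (n:ℝ)) * ∑ j, F i j * z0 j) :=
            mul_le_mul_of_nonneg_left (hz0con i) (hσ0 i)
        _ = 1 / (n:ℝ) * (σ i * ∑ j, F i j * z0 j) := by ring
    have hDs : D σ = -(∑ i, b i * σ i) +
        (1 / (n : ℝ)) * ∑ j, r j * Psi lp lm Γinv ((∑ i, σ i * F i j) / r j) := rfl
    rw [hDs, ecomm σ]
    linarith [hsum2, hlin]
  -- Direction 1 : sInf SetA ≤ (1/2) sInf SetB
  have step1 : ∀ v ∈ SetB, 2 * sInf SetA ≤ v := by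
    rintro v ⟨σ, hσ0, rfl⟩
    set g : Fin n → ℝ := fun j => gO lp lm Γinv ((∑ i, σ i * F i j) / r j) with hgdef
    have hgbox : ∀ j, g j ∈ Set.Icc (-1:ℝ) 1 := fun j => gO_mem hGinvMem _
    have hsupB : sSup (W g) ≤ (1/2) * D σ := by
      apply csSup_le (hWne g)
      rintro w ⟨z, hzZ, rfl⟩
      obtain ⟨hzbox, hzcon⟩ := hzZ
      have hpt : ∀ j, r j * ((1 + z j) / 2 * lp (g j) + (1 - z j) / 2 * lm (g j))
          ≤ (1/2) * (r j * Psi lp lm Γinv ((∑ i, σ i * F i j) / r j)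
              - (∑ i, σ i * F i j) * z j) := by
        intro j
        have h := gO_opt hGinvRight ((∑ i, σ i * F i j) / r j) (z j) (hzbox j)
        have h2 := mul_le_mul_of_nonneg_left h (by linarith [hr j] : (0:ℝ) ≤ r j / 2)
        have e' : z j * (r j * ((∑ i, σ i * F i j) / r j)) = z j * (∑ i, σ i * F i j) := by
          rw [hrm σ j]
        nlinarith [h2, e']
      have hsum := Finset.sum_le_sum fun j (_ : j ∈ Finset.univ) => hpt j
      have hsum2 := mul_le_mul_of_nonneg_left hsum (by positivity : (0:ℝ) ≤ 1 / (n:ℝ))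
      have hlin : ∑ i, σ i * ((n:ℝ) * b i) ≤ ∑ j, (∑ i, σ i * F i j) * z j := by
        rw [hswap σ z]
        apply Finset.sum_le_sum
        intro i _
        have hT : (n:ℝ) * b i ≤ ∑ j, F i j * z j := by
          have h2 := mul_le_mul_of_nonneg_left (hzcon i) hn'.le
          have e : (n:ℝ) * (1 / (n:ℝ) * ∑ j, F i j * z j) = ∑ j, F i j * z j := by
            field_simp
          linarith [h2, e]
        exact mul_le_mul_of_nonneg_left hT (hσ0 i)
      -- combine
      have edist : ∑ j, (1/2) * (r j * Psi lp lm Γinv ((∑ i, σ i * F i j) / r j)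
            - (∑ i, σ i * F i j) * z j)
          = (1/2) * ((∑ j, r j * Psi lp lm Γinv ((∑ i, σ i * F i j) / r j))
            - ∑ j, (∑ i, σ i * F i j) * z j) := by
        rw [← Finset.sum_sub_distrib, Finset.mul_sum]
      rw [edist] at hsum2
      have enb : ∑ i, σ i * ((n:ℝ) * b i) = (n:ℝ) * ∑ i, σ i * b i := by
        rw [Finset.mul_sum]; exact Finset.sum_congr rfl fun i _ => by ring
      have hDs : D σ = -(∑ i, b i * σ i) +
          (1 / (n : ℝ)) * ∑ j, r j * Psi lp lm Γinv ((∑ i, σ i * F i j) / r j) := rfl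
      show (1 / (n : ℝ)) * ∑ j, r j * ((1 + z j) / 2 * lp (g j) + (1 - z j) / 2 * lm (g j))
        ≤ (1/2) * D σ
      rw [hDs, ecomm σ]
      have efin : (1 / (n:ℝ)) * ((1/2) * ((∑ j, r j * Psi lp lm Γinv ((∑ i, σ i * F i j) / r j))
            - (n:ℝ) * ∑ i, σ i * b i))
          = (1/2) * (-(∑ i, σ i * b i) +
            (1 / (n:ℝ)) * ∑ j, r j * Psi lp lm Γinv ((∑ i, σ i * F i j) / r j)) := by
        field_simp
        ring
      have emono : (1 / (n:ℝ)) * ((1/2) * ((∑ j, r j * Psi lp lm Γinv ((∑ i, σ i * F i j) / r j))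
            - ∑ j, (∑ i, σ i * F i j) * z j))
          ≤ (1 / (n:ℝ)) * ((1/2) * ((∑ j, r j * Psi lp lm Γinv ((∑ i, σ i * F i j) / r j))
            - (n:ℝ) * ∑ i, σ i * b i)) := by
        apply mul_le_mul_of_nonneg_left ?_ (by positivity : (0:ℝ) ≤ 1 / (n:ℝ))
        rw [← enb]
        nlinarith [hlin]
      linarith [hsum2, emono, efin]
    have hvA : sSup (W g) ∈ SetA := ⟨g, hgbox, rfl⟩
    have h3 := csInf_le hAbdd hvA
    calc 2 * sInf SetA ≤ 2 * sSup (W g) := by linarith [h3]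
    _ ≤ D σ := by
      have h5 := mul_le_mul_of_nonneg_left hsupB (by norm_num : (0:ℝ) ≤ 2)
      ring_nf at h5
      ring_nf
      linarith [h5]
  have dir1 : sInf SetA ≤ (1/2) * sInf SetB := by
    have h2 : 2 * sInf SetA ≤ sInf SetB := le_csInf hBne step1
    linarith
  -- Direction 2
  have step2 : ∀ v ∈ SetA, (1/2) * sInf SetB ≤ v := by
    rintro v ⟨g, hgbox, rfl⟩
    have key : sInf SetB ≤ 2 * sSup (W g) := by
      apply le_of_forall_pos_le_add
      intro ε hε
      set c0 : ℝ := (1/(2*(n:ℝ))) * ∑ j, r j * (lp (g j) + lm (g j)) with hc0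
      set a : Fin n → ℝ := fun j => -(r j * (lm (g j) - lp (g j))) / (2 * (n:ℝ)) with ha
      have hid : ∀ z : Fin n → ℝ, Loss g z = c0 + ∑ j, a j * z j := by
        intro z
        show (1 / (n : ℝ)) * ∑ j, r j * ((1 + z j) / 2 * lp (g j) + (1 - z j) / 2 * lm (g j))
          = c0 + ∑ j, a j * z j
        rw [hc0, Finset.mul_sum, Finset.mul_sum, ← Finset.sum_add_distrib]
        apply Finset.sum_congr rfl
        intro j _
        rw [ha]
        simp only
        field_simp
        ring
      have hz0c' : ∀ i, (n:ℝ) * b i ≤ ∑ j, F i j * z0 j := by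
        intro i
        have h2 := mul_le_mul_of_nonneg_left (hz0con i) hn'.le
        have e : (n:ℝ) * (1 / (n:ℝ) * ∑ j, F i j * z0 j) = ∑ j, F i j * z0 j := by field_simp
        linarith [h2, e]
      have hSfeas : ∀ z : Fin n → ℝ, (∀ j, z j ∈ Set.Icc (-1:ℝ) 1) →
          (∀ i, (fun i => (n:ℝ) * b i) i ≤ ∑ j, F i j * z j) →
          ∑ j, a j * z j ≤ sSup (W g) - c0 := by
        intro z hzbox hzcon
        have hzZ : z ∈ ZSet p n F b := by
          refine ⟨hzbox, fun i => ?_⟩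
          have h2 := mul_le_mul_of_nonneg_left (hzcon i) (by positivity : (0:ℝ) ≤ 1 / (n:ℝ))
          have e : (1 / (n:ℝ)) * ((n:ℝ) * b i) = b i := by field_simp
          simp only at h2
          linarith [h2, e]
        have hmem : Loss g z ∈ W g := ⟨z, hzZ, rfl⟩
        have hle := le_csSup (hWbdd g hgbox) hmem
        have := hid z
        linarith
      obtain ⟨σ, hσ0, hdual⟩ := lp_dual F (fun i => (n:ℝ) * b i) a z0 hz0box hz0c'
        (sSup (W g) - c0) hSfeas (ε/2) (by positivity)
      set τ : Fin p → ℝ := fun i => 2 * (n:ℝ) * σ i with hτ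
      have hτ0 : ∀ i, 0 ≤ τ i := fun i =>
        mul_nonneg (by positivity) (hσ0 i)
      have hpt : ∀ j, r j * Psi lp lm Γinv ((∑ i, τ i * F i j) / r j)
          ≤ r j * (lp (g j) + lm (g j)) + 2*(n:ℝ) * |a j + ∑ i, σ i * F i j| := by
        intro j
        have h := Psi_le hlpm hlmm hGinvMem hGinvRight ((∑ i, τ i * F i j) / r j) (g j) (hgbox j)
        have h2 := mul_le_mul_of_nonneg_left h (hr j).le
        have e1 : r j * |(∑ i, τ i * F i j) / r j - (lm (g j) - lp (g j))|
            = 2*(n:ℝ) * |a j + ∑ i, σ i * F i j| := by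
          rw [show r j * |(∑ i, τ i * F i j) / r j - (lm (g j) - lp (g j))|
              = |r j * ((∑ i, τ i * F i j) / r j - (lm (g j) - lp (g j)))| by
            rw [abs_mul, abs_of_pos (hr j)]]
          rw [show (2:ℝ)*(n:ℝ) * |a j + ∑ i, σ i * F i j|
              = |2*(n:ℝ) * (a j + ∑ i, σ i * F i j)| by
            rw [abs_mul, abs_of_pos (by positivity : (0:ℝ) < 2*(n:ℝ))]]
          congr 1
          have eτ : (∑ i, τ i * F i j) = 2*(n:ℝ)*(∑ i, σ i * F i j) := by
            rw [Finset.mul_sum]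
            exact Finset.sum_congr rfl fun i _ => by simp only [hτ]; ring
          have ea : a j = -(r j * (lm (g j) - lp (g j))) / (2 * (n:ℝ)) := rfl
          rw [eτ, ea]
          have hrne := (hr j).ne'
          have hnne := hn'.ne'
          field_simp
          ring
        have e0 : r j * (lp (g j) + lm (g j)
              + |(∑ i, τ i * F i j) / r j - (lm (g j) - lp (g j))|)
            = r j * (lp (g j) + lm (g j))
              + r j * |(∑ i, τ i * F i j) / r j - (lm (g j) - lp (g j))| := by ring
        rw [e0] at h2
        linarith [h2, e1]
      have hsum := Finset.sum_le_sum fun j (_ : j ∈ Finset.univ) => hpt j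
      rw [Finset.sum_add_distrib] at hsum
      have hsum2 := mul_le_mul_of_nonneg_left hsum (by positivity : (0:ℝ) ≤ 1 / (n:ℝ))
      have ebτ : ∑ i, b i * τ i = 2 * ∑ i, σ i * ((n:ℝ) * b i) := by
        rw [Finset.mul_sum]
        exact Finset.sum_congr rfl fun i _ => by simp only [hτ]; ring
      have e2 : (1 / (n:ℝ)) * ((∑ j, r j * (lp (g j) + lm (g j)))
            + ∑ j, 2*(n:ℝ) * |a j + ∑ i, σ i * F i j|)
          = 2 * c0 + 2 * ∑ j, |a j + ∑ i, σ i * F i j| := by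
        rw [← Finset.mul_sum, hc0]
        field_simp
      have hDτ : D τ ≤ 2 * sSup (W g) + ε := by
        have hDs : D τ = -(∑ i, b i * τ i) +
            (1 / (n : ℝ)) * ∑ j, r j * Psi lp lm Γinv ((∑ i, τ i * F i j) / r j) := rfl
        rw [hDs, ebτ]
        linarith [hsum2, e2, hdual]
      have hmemB : D τ ∈ SetB := ⟨τ, hτ0, rfl⟩
      have := csInf_le hBbdd hmemB
      linarith [hDτ]
    linarith [key]
  have dir2 : (1/2) * sInf SetB ≤ sInf SetA := le_csInf hAne step2
  linarith [dir1, dir2]
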